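/- Let N ≥ 1, s ∈ (0,1), R > 0. Set σ = 2s if s < 1/2, σ = 1/2 if s = 1/2, and σ = 2s−1 if s > 1/2. Then there exists C = C(N,σ) > 0 such that ∫_{B_R} ∫_{B_{R+1}∖B_R} (|x|−R)² / |x−y|^{N+2s} dx dy ≤ C R^{N−σ}. -/

import Mathlib

open MeasureTheory Metric Set
open scoped ENNReal
local notation "dim" => Module.finrank ℝ



lemma lintegral_norm_polar {E : Type*} [NormedAddCommGroup E] [NormedSpace ℝ E]
    [MeasurableSpace E] [BorelSpace E] [Nontrivial E] (μ : Measure E)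
    [FiniteDimensional ℝ E] [μ.IsAddHaarMeasure]
    (g : ℝ → ℝ≥0∞) (hg : Measurable g) :
    ∫⁻ x, g ‖x‖ ∂μ =
      (dim E * μ (ball 0 1)) * ∫⁻ r in Ioi (0:ℝ), ENNReal.ofReal (r ^ (dim E - 1)) * g r := by
  have hmg : Measurable fun x : sphere (0:E) 1 × Ioi (0:ℝ) => g x.2 :=
    (hg.comp measurable_subtype_coe).comp measurable_snd
  calc
    ∫⁻ x, g ‖x‖ ∂μ = ∫⁻ x : ({(0)}ᶜ : Set E), g (‖x.1‖) ∂(μ.comap (↑)) := by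
      rw [lintegral_subtype_comap (measurableSet_singleton _).compl fun x ↦ g (‖x‖),
        restrict_compl_singleton]
    _ = ∫⁻ x : sphere (0 : E) 1 × Ioi (0 : ℝ), g x.2
          ∂μ.toSphere.prod (.volumeIoiPow (dim E - 1)) :=
      by rw [← μ.measurePreserving_homeomorphUnitSphereProd.lintegral_comp hmg]; simp [homeomorphUnitSphereProd]
    _ = μ.toSphere univ * ∫⁻ x : Ioi (0 : ℝ), g x ∂(Measure.volumeIoiPow (dim E - 1)) := by
      rw [lintegral_prod _ hmg.aemeasurable]
      simp [lintegral_const, mul_comm]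
    _ = _ := by
      have h1 := lintegral_withDensity_eq_lintegral_mul
        (Measure.comap Subtype.val volume : Measure (Ioi (0:ℝ)))
        (f := fun r : Ioi (0:ℝ) => ENNReal.ofReal (r.1 ^ (dim E - 1))) (by fun_prop)
        (g := fun a : Ioi (0:ℝ) => g a.1) (by fun_prop)
      rw [Measure.toSphere_apply_univ, Measure.volumeIoiPow, h1]
      simp only [Pi.mul_apply]
      rw [lintegral_subtype_comap measurableSet_Ioi
        (fun r : ℝ => ENNReal.ofReal (r ^ (dim E - 1)) * g r)]

lemma one_dim_tail {n : ℕ} (hn : 1 ≤ n) {σ : ℝ} (hσ : 0 < σ) {r : ℝ} (hr : 0 < r) :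
    ∫⁻ t in Ioi (0:ℝ), ENNReal.ofReal (t ^ (n - 1)) *
        (Ici r).indicator (fun u => ENNReal.ofReal (u ^ (-((n:ℝ) + σ)))) t
      ≤ ENNReal.ofReal (r ^ (-σ) / σ) := by
  have key : ∀ t : ℝ, ENNReal.ofReal (t ^ (n - 1)) *
      (Ici r).indicator (fun u => ENNReal.ofReal (u ^ (-((n:ℝ) + σ)))) t
      = (Ici r).indicator (fun u => ENNReal.ofReal (u ^ (n-1) * u ^ (-((n:ℝ) + σ)))) t := by
    intro t
    by_cases ht : t ∈ Ici r
    · simp [ht, Set.indicator_of_mem, ENNReal.ofReal_mul,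
        pow_nonneg (le_trans hr.le ht : (0:ℝ) ≤ t)]
    · simp [ht, Set.indicator_of_notMem]
  simp only [key]
  rw [lintegral_indicator measurableSet_Ici]
  rw [Measure.restrict_restrict measurableSet_Ici]
  have hsub : Ici r ∩ Ioi 0 = Ici r := inter_eq_left.2 fun x hx => lt_of_lt_of_le hr hx
  rw [hsub]
  have hcong : ∀ t ∈ Ici r, ENNReal.ofReal (t ^ (n-1) * t ^ (-((n:ℝ) + σ)))
      = ENNReal.ofReal (t ^ (-1 - σ)) := by
    intro t ht
    have ht0 : 0 < t := lt_of_lt_of_le hr ht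
    congr 1
    rw [← Real.rpow_natCast t (n-1), ← Real.rpow_add ht0]
    congr 1
    have : ((n - 1 : ℕ) : ℝ) = (n : ℝ) - 1 := by
      push_cast [Nat.cast_sub hn]; ring
    rw [this]; ring
  rw [setLIntegral_congr_fun measurableSet_Ici hcong]
  have hint : IntegrableOn (fun t : ℝ => t ^ (-1 - σ)) (Ioi r) volume :=
    integrableOn_Ioi_rpow_of_lt (by linarith) hr
  rw [← Measure.restrict_congr_set Ioi_ae_eq_Ici,
    ← ofReal_integral_eq_lintegral_ofReal hint]
  · rw [integral_Ioi_rpow_of_lt (by linarith) hr]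
    apply le_of_eq
    congr 1
    rw [show (-1 - σ + 1 : ℝ) = -σ by ring]
    field_simp
  · filter_upwards [ae_restrict_mem measurableSet_Ioi] with t ht
    exact Real.rpow_nonneg (le_of_lt (lt_trans hr ht)) _

lemma one_dim_ball {n : ℕ} (hn : 1 ≤ n) {σ : ℝ} (hσ0 : 0 < σ) (hσ1 : σ < 1)
    {R : ℝ} (hR : 0 < R) :
    ∫⁻ t in Ioi (0:ℝ), ENNReal.ofReal (t ^ (n - 1)) *
        (Ico 0 R).indicator (fun u => ENNReal.ofReal ((R - u) ^ (-σ))) t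
      ≤ ENNReal.ofReal (R ^ ((n:ℝ) - σ) / (1 - σ)) := by
  have key : ∀ t : ℝ, ENNReal.ofReal (t ^ (n - 1)) *
      (Ico 0 R).indicator (fun u => ENNReal.ofReal ((R - u) ^ (-σ))) t
      = (Ico 0 R).indicator (fun u => ENNReal.ofReal (u ^ (n-1) * (R - u) ^ (-σ))) t := by
    intro t
    by_cases ht : t ∈ Ico 0 R
    · simp [ht, Set.indicator_of_mem, ENNReal.ofReal_mul, pow_nonneg ht.1]
    · simp [ht, Set.indicator_of_notMem]
  simp only [key]
  rw [lintegral_indicator measurableSet_Ico, Measure.restrict_restrict measurableSet_Ico]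
  have hsub : Ico 0 R ∩ Ioi 0 = Ioo 0 R := by
    ext x; simp [mem_Ico, mem_Ioi, mem_Ioo, and_comm]; intro h; exact fun _ => h.le
  rw [hsub]
  have step : ∫⁻ t in Ioo (0:ℝ) R, ENNReal.ofReal (t ^ (n-1) * (R - t) ^ (-σ))
      ≤ ∫⁻ t in Ioo (0:ℝ) R, ENNReal.ofReal (R ^ (n-1) * (R - t) ^ (-σ)) := by
    apply setLIntegral_mono ((by fun_prop :
      Measurable fun t : ℝ => (R:ℝ) ^ (n-1) * (R - t) ^ (-σ)).ennreal_ofReal)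
    intro t ht
    apply ENNReal.ofReal_le_ofReal
    apply mul_le_mul_of_nonneg_right (pow_le_pow_left₀ ht.1.le ht.2.le _)
      (Real.rpow_nonneg (by linarith [ht.2]) _)
  refine le_trans step ?_
  have hmeas : Measurable fun t : ℝ => ENNReal.ofReal ((R - t) ^ (-σ)) := by fun_prop
  calc ∫⁻ t in Ioo (0:ℝ) R, ENNReal.ofReal (R ^ (n-1) * (R - t) ^ (-σ))
      = ENNReal.ofReal (R ^ (n-1)) * ∫⁻ t in Ioo (0:ℝ) R, ENNReal.ofReal ((R - t) ^ (-σ)) := by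
        rw [← lintegral_const_mul _ hmeas]
        congr 1; ext t
        rw [← ENNReal.ofReal_mul (pow_nonneg hR.le _)]
    _ ≤ ENNReal.ofReal (R ^ (n-1)) * ENNReal.ofReal (R ^ (1 - σ) / (1 - σ)) := by
        gcongr
        have hii : IntervalIntegrable (fun u : ℝ => (R - u) ^ (-σ)) volume 0 R := by
          have h1 : IntervalIntegrable (fun u : ℝ => u ^ (-σ)) volume 0 R :=
            intervalIntegral.intervalIntegrable_rpow' (by linarith)
          simpa using (h1.comp_sub_left R).symm
        have hint : IntegrableOn (fun u : ℝ => (R - u) ^ (-σ)) (Ioc 0 R) volume := by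
          simpa [intervalIntegrable_iff_integrableOn_Ioc_of_le hR.le] using hii
        rw [Measure.restrict_congr_set Ioo_ae_eq_Ioc,
          ← ofReal_integral_eq_lintegral_ofReal hint ?_]
        · apply ENNReal.ofReal_le_ofReal
          rw [← intervalIntegral.integral_of_le hR.le]
          rw [intervalIntegral.integral_comp_sub_left (fun u : ℝ => u ^ (-σ)) R]
          simp only [sub_self, sub_zero]
          rw [integral_rpow (Or.inl (by linarith))]
          rw [Real.zero_rpow (by linarith : -σ + 1 ≠ 0)]
          apply le_of_eq
          rw [show -σ + 1 = 1 - σ by ring]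
          ring
        · filter_upwards [ae_restrict_mem measurableSet_Ioc] with t ht
          exact Real.rpow_nonneg (by linarith [ht.2]) _
    _ = ENNReal.ofReal (R ^ ((n:ℝ) - σ) / (1 - σ)) := by
        rw [← ENNReal.ofReal_mul (pow_nonneg hR.le _)]
        congr 1
        rw [← Real.rpow_natCast R (n-1)]
        rw [div_eq_mul_inv, div_eq_mul_inv, ← mul_assoc, ← Real.rpow_add hR]
        congr 2
        push_cast [Nat.cast_sub hn]; ring
variable {E : Type*} [NormedAddCommGroup E] [NormedSpace ℝ E]
    [MeasurableSpace E] [BorelSpace E] (μ : Measure E)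
    [FiniteDimensional ℝ E] [μ.IsAddHaarMeasure]

lemma tail_bound (hn : 1 ≤ dim E) {σ : ℝ} (hσ : 0 < σ) {r : ℝ} (hr : 0 < r) :
    ∫⁻ z in (ball (0:E) r)ᶜ, ENNReal.ofReal (‖z‖ ^ (-((dim E : ℝ) + σ))) ∂μ
      ≤ (dim E * μ (ball 0 1)) * ENNReal.ofReal (r ^ (-σ) / σ) := by
  haveI : Nontrivial E := Module.nontrivial_of_finrank_pos (R := ℝ) hn
  have heq : ∫⁻ z in (ball (0:E) r)ᶜ, ENNReal.ofReal (‖z‖ ^ (-((dim E : ℝ) + σ))) ∂μ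
      = ∫⁻ z, (Ici r).indicator
          (fun u => ENNReal.ofReal (u ^ (-((dim E : ℝ) + σ)))) ‖z‖ ∂μ := by
    rw [← lintegral_indicator measurableSet_ball.compl]
    congr 1; ext z
    by_cases hz : z ∈ (ball (0:E) r)ᶜ
    · have : ‖z‖ ∈ Ici r := by
        simpa [mem_ball_zero_iff, not_lt] using hz
      simp [hz, this, Set.indicator_of_mem]
    · have : ‖z‖ ∉ Ici r := by
        simp only [mem_compl_iff, not_not] at hz
        simpa [mem_Ici, not_le] using (mem_ball_zero_iff.1 hz)
      simp [hz, this, Set.indicator_of_notMem]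
  rw [heq, lintegral_norm_polar μ _
    (Measurable.indicator (by fun_prop) measurableSet_Ici)]
  exact mul_le_mul_right (one_dim_tail hn hσ hr) _

lemma ball_bound (hn : 1 ≤ dim E) {σ : ℝ} (hσ0 : 0 < σ) (hσ1 : σ < 1) {R : ℝ} (hR : 0 < R) :
    ∫⁻ y in ball (0:E) R, ENNReal.ofReal ((R - ‖y‖) ^ (-σ)) ∂μ
      ≤ (dim E * μ (ball 0 1)) * ENNReal.ofReal (R ^ ((dim E : ℝ) - σ) / (1 - σ)) := by
  haveI : Nontrivial E := Module.nontrivial_of_finrank_pos (R := ℝ) hn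
  have heq : ∫⁻ y in ball (0:E) R, ENNReal.ofReal ((R - ‖y‖) ^ (-σ)) ∂μ
      = ∫⁻ y, (Ico 0 R).indicator (fun u => ENNReal.ofReal ((R - u) ^ (-σ))) ‖y‖ ∂μ := by
    rw [← lintegral_indicator measurableSet_ball]
    congr 1; ext y
    by_cases hy : y ∈ ball (0:E) R
    · have : ‖y‖ ∈ Ico 0 R := ⟨norm_nonneg y, mem_ball_zero_iff.1 hy⟩
      simp [hy, this, Set.indicator_of_mem]
    · have : ‖y‖ ∉ Ico 0 R := by
        simp only [mem_ball_zero_iff, not_lt] at hy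
        simp [mem_Ico, not_and, not_lt, hy]
      simp [hy, this, Set.indicator_of_notMem]
  rw [heq, lintegral_norm_polar μ _
    (Measurable.indicator (by fun_prop) measurableSet_Ico)]
  exact mul_le_mul_right (one_dim_ball hn hσ0 hσ1 hR) _


lemma pointwise_key {s σ NR t a : ℝ} (hσ2s : σ ≤ 2*s) (hd2 : 2*s - σ ≤ 2)
    (ht : 0 < t) (ha0 : 0 ≤ a) (hat : a ≤ t) (ha1 : a ≤ 1) :
    a ^ 2 / t ^ (NR + 2*s) ≤ t ^ (-(NR + σ)) := by
  rw [div_le_iff₀ (Real.rpow_pos_of_pos ht _)]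
  have hexp : t ^ (-(NR + σ)) * t ^ (NR + 2*s) = t ^ (2*s - σ) := by
    rw [← Real.rpow_add ht]; congr 1; ring
  rw [hexp]
  set m := min t 1 with hm
  have hm0 : 0 < m := lt_min ht one_pos
  have hm1 : m ≤ 1 := min_le_right _ _
  calc a ^ 2 ≤ m ^ 2 := pow_le_pow_left₀ ha0 (le_min hat ha1) 2
    _ = m ^ (2:ℝ) := by
        rw [← Real.rpow_natCast m 2]; norm_num
    _ ≤ m ^ (2*s - σ) := Real.rpow_le_rpow_of_exponent_ge hm0 hm1 hd2
    _ ≤ t ^ (2*s - σ) := Real.rpow_le_rpow hm0.le (min_le_left _ _) (by linarith)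

theorem annulus_ball_estimate (N : ℕ) (hN : 1 ≤ N) (s : ℝ) (hs : 0 < s) (hs1 : s < 1)
    (σ : ℝ)
    (hσlt : s < 1/2 → σ = 2 * s)
    (hσeq : s = 1/2 → σ = 1/2)
    (hσgt : 1/2 < s → σ = 2 * s - 1) :
    ∃ C : ℝ, 0 < C ∧ ∀ R : ℝ, 0 < R →
      (∫⁻ y in ball (0 : EuclideanSpace ℝ (Fin N)) R,
        ∫⁻ x in ball (0 : EuclideanSpace ℝ (Fin N)) (R + 1) \ ball 0 R,
          ENNReal.ofReal ((‖x‖ - R) ^ 2 / ‖x - y‖ ^ ((N : ℝ) + 2 * s)))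
        ≤ ENNReal.ofReal (C * R ^ ((N : ℝ) - σ)) := by
  set E := EuclideanSpace ℝ (Fin N)
  have hdim : dim E = N := finrank_euclideanSpace_fin
  have hn : 1 ≤ dim E := by rw [hdim]; exact hN
  -- facts about σ
  obtain ⟨hσ0, hσ1, hσ2s, hd2⟩ : 0 < σ ∧ σ < 1 ∧ σ ≤ 2*s ∧ 2*s - σ ≤ 2 := by
    rcases lt_trichotomy s (1/2) with h | h | h
    · rw [hσlt h]; refine ⟨by linarith, by linarith, le_refl _, by linarith⟩
    · rw [hσeq h]; refine ⟨by norm_num, by norm_num, by rw [h]; norm_num, by rw [h]; norm_num⟩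
    · rw [hσgt h]; refine ⟨by linarith, by linarith, by linarith, by linarith⟩
  set κ := volume (ball (0:E) 1) with hκ
  have hκt : κ ≠ ⊤ := measure_ball_lt_top.ne
  have hκ0 : 0 < κ.toReal :=
    ENNReal.toReal_pos (measure_ball_pos _ _ one_pos).ne' hκt
  set c1 : ℝ := (N * κ.toReal) / σ with hc1
  have hc1pos : 0 < c1 := by
    apply div_pos _ hσ0
    have : (0:ℝ) < N := by exact_mod_cast hN
    positivity
  set C : ℝ := c1 * ((N * κ.toReal) / (1 - σ)) with hC
  have hNpos : (0:ℝ) < N := by exact_mod_cast hN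
  have hCpos : 0 < C := by
    apply mul_pos hc1pos
    apply div_pos (by positivity) (by linarith)
  refine ⟨C, hCpos, fun R hR => ?_⟩
  have hNκ : ((N : ℝ≥0∞) * κ) = ENNReal.ofReal (N * κ.toReal) := by
    rw [ENNReal.ofReal_mul (Nat.cast_nonneg N), ENNReal.ofReal_natCast,
      ENNReal.ofReal_toReal hκt]
  -- inner estimate for each y in the ball
  have h1 : ∀ y ∈ ball (0:E) R,
      (∫⁻ x in ball (0:E) (R + 1) \ ball 0 R,
        ENNReal.ofReal ((‖x‖ - R) ^ 2 / ‖x - y‖ ^ ((N : ℝ) + 2 * s)))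
      ≤ ENNReal.ofReal c1 * ENNReal.ofReal ((R - ‖y‖) ^ (-σ)) := by
    intro y hy
    have hyR : ‖y‖ < R := mem_ball_zero_iff.1 hy
    have hry : 0 < R - ‖y‖ := by linarith
    have hmeasg : Measurable fun x : E => ENNReal.ofReal (‖x - y‖ ^ (-((N:ℝ) + σ))) := by
      fun_prop
    have step1 : (∫⁻ x in ball (0:E) (R + 1) \ ball 0 R,
          ENNReal.ofReal ((‖x‖ - R) ^ 2 / ‖x - y‖ ^ ((N : ℝ) + 2 * s)))
        ≤ ∫⁻ x in ball (0:E) (R + 1) \ ball 0 R,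
          ENNReal.ofReal (‖x - y‖ ^ (-((N:ℝ) + σ))) := by
      apply setLIntegral_mono hmeasg
      intro x hx
      obtain ⟨hx1, hx2⟩ := hx
      have hxR : R ≤ ‖x‖ := not_lt.1 (fun h => hx2 (mem_ball_zero_iff.2 h))
      have hx1' : ‖x‖ < R + 1 := mem_ball_zero_iff.1 hx1
      have hat : ‖x‖ - R ≤ ‖x - y‖ := by
        have := norm_sub_norm_le x y
        linarith
      have ht0 : 0 < ‖x - y‖ := by
        have := norm_sub_norm_le x y
        linarith
      exact ENNReal.ofReal_le_ofReal
        (pointwise_key hσ2s hd2 ht0 (by linarith) hat (by linarith))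
    have step2 : (∫⁻ x in ball (0:E) (R + 1) \ ball 0 R,
          ENNReal.ofReal (‖x - y‖ ^ (-((N:ℝ) + σ))))
        ≤ ∫⁻ x in (ball y (R - ‖y‖))ᶜ, ENNReal.ofReal (‖x - y‖ ^ (-((N:ℝ) + σ))) := by
      apply lintegral_mono_set
      intro x hx
      obtain ⟨hx1, hx2⟩ := hx
      have hxR : R ≤ ‖x‖ := not_lt.1 (fun h => hx2 (mem_ball_zero_iff.2 h))
      simp only [mem_compl_iff, mem_ball, dist_eq_norm, not_lt]
      have := norm_sub_norm_le x y
      have hd : dist x y = ‖x - y‖ := dist_eq_norm x y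
      linarith
    have step3 : (∫⁻ x in (ball y (R - ‖y‖))ᶜ, ENNReal.ofReal (‖x - y‖ ^ (-((N:ℝ) + σ))))
        = ∫⁻ z in (ball (0:E) (R - ‖y‖))ᶜ, ENNReal.ofReal (‖z‖ ^ (-((N:ℝ) + σ))) := by
      have hmp : MeasurePreserving (fun z : E => z + y) volume volume :=
        measurePreserving_add_right volume y
      have hemb : MeasurableEmbedding (fun z : E => z + y) :=
        (MeasurableEquiv.addRight y).measurableEmbedding
      rw [← hmp.setLIntegral_comp_preimage_emb hemb
        (fun x => ENNReal.ofReal (‖x - y‖ ^ (-((N:ℝ) + σ)))) ((ball y (R - ‖y‖))ᶜ)]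
      have hpre : (fun z : E => z + y) ⁻¹' (ball y (R - ‖y‖))ᶜ = (ball (0:E) (R - ‖y‖))ᶜ := by
        ext z
        simp [mem_ball, dist_eq_norm, add_sub_cancel_right]
      rw [hpre]
      congr 1
      ext z
      simp [add_sub_cancel_right]
    have step4 := tail_bound (volume : Measure E) hn hσ0 hry
    rw [hdim] at step4
    calc (∫⁻ x in ball (0:E) (R + 1) \ ball 0 R,
          ENNReal.ofReal ((‖x‖ - R) ^ 2 / ‖x - y‖ ^ ((N : ℝ) + 2 * s)))
        ≤ ∫⁻ z in (ball (0:E) (R - ‖y‖))ᶜ, ENNReal.ofReal (‖z‖ ^ (-((N:ℝ) + σ))) := by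
          rw [← step3]; exact le_trans step1 step2
      _ ≤ ((N : ℝ≥0∞) * κ) * ENNReal.ofReal ((R - ‖y‖) ^ (-σ) / σ) := step4
      _ = ENNReal.ofReal c1 * ENNReal.ofReal ((R - ‖y‖) ^ (-σ)) := by
          rw [hNκ, ← ENNReal.ofReal_mul (by positivity), ← ENNReal.ofReal_mul hc1pos.le]
          congr 1
          rw [hc1]
          field_simp
  -- outer estimate
  have hmeas2 : Measurable fun y : E =>
      ENNReal.ofReal c1 * ENNReal.ofReal ((R - ‖y‖) ^ (-σ)) := by fun_prop
  calc (∫⁻ y in ball (0:E) R,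
        ∫⁻ x in ball (0:E) (R + 1) \ ball 0 R,
          ENNReal.ofReal ((‖x‖ - R) ^ 2 / ‖x - y‖ ^ ((N : ℝ) + 2 * s)))
      ≤ ∫⁻ y in ball (0:E) R,
          ENNReal.ofReal c1 * ENNReal.ofReal ((R - ‖y‖) ^ (-σ)) :=
        setLIntegral_mono hmeas2 h1
    _ = ENNReal.ofReal c1 * ∫⁻ y in ball (0:E) R, ENNReal.ofReal ((R - ‖y‖) ^ (-σ)) :=
        lintegral_const_mul' _ _ ENNReal.ofReal_ne_top
    _ ≤ ENNReal.ofReal c1 * (((N : ℝ≥0∞) * κ) * ENNReal.ofReal (R ^ ((N:ℝ) - σ) / (1 - σ))) := by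
        have hb := ball_bound (volume : Measure E) hn hσ0 hσ1 hR
        rw [hdim] at hb
        exact mul_le_mul_right hb _
    _ = ENNReal.ofReal (C * R ^ ((N : ℝ) - σ)) := by
        rw [hNκ, ← ENNReal.ofReal_mul (by positivity), ← ENNReal.ofReal_mul hc1pos.le]
        congr 1
        rw [hC]
        field_simp
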